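/- Let A be a commutative Z_(p)-algebra satisfying: (i) A is Z_(p)-flat; (ii) A is integrally closed in A[1/p]; (iii) the absolute Frobenius of A/pA is surjective; (iv) there is a sequence (p_m)_{m≥0} in A with p_0 = p and p_{m+1}^p = p_m. Let p̲ ∈ R_A = lim_{x↦x^p} A/pA be the element induced by (p_m) and set ξ = [p̲] − p ∈ W(R_A). Then the sequence 0 → W(R_A) → W(R_A) → Â → 0 is exact, where the first map is multiplication by ξ and the second is Fontaine's homomorphism θ. -/

import Mathlib

set_option linter.unusedSectionVars false

noncomputable section


namespace S8

open WittVector Function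

variable {p : ℕ} [hp : Fact p.Prime] {R : Type*} [CommRing R]

local notation "𝕎" => WittVector p

lemma coeff_zero_add (x y : 𝕎 R) : (x + y).coeff 0 = x.coeff 0 + y.coeff 0 := by
  have h : ∀ z : 𝕎 R, ghostComponent 0 z = z.coeff 0 := by
    intro z
    rw [ghostComponent_apply, wittPolynomial_zero, MvPolynomial.aeval_X]
  have := map_add (ghostComponent (p := p) (R := R) 0) x y
  rwa [h, h, h] at this

lemma coeff_zero_sub (x y : 𝕎 R) : (x - y).coeff 0 = x.coeff 0 - y.coeff 0 := by
  have h : ∀ z : 𝕎 R, ghostComponent 0 z = z.coeff 0 := by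
    intro z
    rw [ghostComponent_apply, wittPolynomial_zero, MvPolynomial.aeval_X]
  have := map_sub (ghostComponent (p := p) (R := R) 0) x y
  rwa [h, h, h] at this

lemma iterate_versch_coeff_lt (x : 𝕎 R) : ∀ n j, j < n → (verschiebung^[n] x).coeff j = 0 := by
  intro n
  induction n with
  | zero => intro j hj; omega
  | succ n ih =>
    intro j hj
    rw [Function.iterate_succ_apply']
    cases j with
    | zero => exact verschiebung_coeff_zero _
    | succ j => rw [verschiebung_coeff_succ]; exact ih j (by omega)

lemma p_pow_eq_iterate_versch [CharP R p] (n : ℕ) :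
    (p : 𝕎 R) ^ n = verschiebung^[n] (1 : 𝕎 R) := by
  ext j
  rcases lt_trichotomy j n with h | rfl | h
  · rw [coeff_p_pow_eq_zero p R (by omega), iterate_versch_coeff_lt _ n j h]
  · rw [coeff_p_pow]
    have := iterate_verschiebung_coeff (p := p) (R := R) 1 j 0
    rw [zero_add] at this
    rw [this, one_coeff_zero]
  · rw [coeff_p_pow_eq_zero p R (by omega)]
    obtain ⟨k, rfl⟩ : ∃ k, j = k + n := ⟨j - n, by omega⟩
    rw [iterate_verschiebung_coeff, one_coeff_eq_of_pos]
    omega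

lemma p_pow_mul_eq [CharP R p] (n : ℕ) (y : 𝕎 R) :
    (p : 𝕎 R) ^ n * y = verschiebung^[n] (frobenius^[n] y) := by
  rw [p_pow_eq_iterate_versch, iterate_verschiebung_mul_left, one_mul]

lemma coeff_p_pow_mul [CharP R p] (n : ℕ) (y : 𝕎 R) (j : ℕ) (hj : j < n) :
    ((p : 𝕎 R) ^ n * y).coeff j = 0 := by
  rw [p_pow_mul_eq]; exact iterate_versch_coeff_lt _ n j hj

lemma exists_p_pow_mul [CharP R p] [PerfectRing R p] (n : ℕ) (x : 𝕎 R)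
    (h : ∀ i < n, x.coeff i = 0) : ∃ y, x = (p : 𝕎 R) ^ n * y := by
  refine ⟨((frobeniusEquiv p R).symm)^[n] (x.shift n), ?_⟩
  rw [p_pow_mul_eq]
  have hfe : frobenius^[n] (((frobeniusEquiv p R).symm)^[n] (x.shift n)) = x.shift n := by
    have : Function.RightInverse ((frobeniusEquiv p R).symm)
        (frobenius : 𝕎 R → 𝕎 R) := fun z => by
      simpa using (frobeniusEquiv p R).apply_symm_apply z
    exact this.iterate n _
  rw [hfe]
  exact eq_iterate_verschiebung h

end S8

namespace S8T

open WittVector Function Finset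

variable {p : ℕ} [hp : Fact p.Prime] {R : Type*} [CommRing R] [CharP R p] [PerfectRing R p]

local notation "𝕎" => WittVector p

-- divisible by p^n ↔ truncation vanishes
lemma trunc_eq_zero_iff (n : ℕ) (x : 𝕎 R) :
    WittVector.truncate n x = 0 ↔ ∃ y, x = (p : 𝕎 R) ^ n * y := by
  constructor
  · intro h
    have := (WittVector.mem_ker_truncate n x).mp h
    exact S8.exists_p_pow_mul n x this
  · rintro ⟨y, rfl⟩
    exact (WittVector.mem_ker_truncate n _).mpr fun i hi => S8.coeff_p_pow_mul n y i hi

lemma trunc_zero_of_haus (x : 𝕎 R) (h : ∀ n, WittVector.truncate n x = 0) : x = 0 := by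
  ext i
  rw [zero_coeff]
  exact (WittVector.mem_ker_truncate (i + 1) x).mp (h (i + 1)) i (Nat.lt_succ_self i)

/-- limit of partial sums `∑_{k<n} p^k * a k` -/
lemma exists_series_limit (a : ℕ → 𝕎 R) :
    ∃ s : 𝕎 R, ∀ n, WittVector.truncate n
      (s - ∑ k ∈ range n, (p : 𝕎 R) ^ k * a k) = 0 := by
  set S : ℕ → 𝕎 R := fun n => ∑ k ∈ range n, (p : 𝕎 R) ^ k * a k with hS
  have key : ∀ i n, i < n → (S n).coeff i = (S (i + 1)).coeff i := by
    intro i n hin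
    have hsplit : S n = S (i + 1) + ∑ k ∈ Ico (i + 1) n, (p : 𝕎 R) ^ k * a k := by
      simp only [hS]
      rw [← sum_range_add_sum_Ico (fun k => (p : 𝕎 R) ^ k * a k) (by omega : i + 1 ≤ n)]
    have htr : WittVector.truncate (i + 1) (S n) = WittVector.truncate (i + 1) (S (i + 1)) := by
      rw [hsplit, map_add]
      have : ∀ k ∈ Ico (i + 1) n, WittVector.truncate (i + 1) ((p : 𝕎 R) ^ k * a k) = 0 := by
        intro k hk
        rw [mem_Ico] at hk
        refine (trunc_eq_zero_iff _ _).mpr ⟨(p : 𝕎 R) ^ (k - (i + 1)) * a k, ?_⟩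
        rw [← mul_assoc, ← pow_add]
        congr 2
        omega
      have h2 : WittVector.truncate (i + 1) (∑ k ∈ Ico (i + 1) n, (p : 𝕎 R) ^ k * a k) = 0 := by
        rw [map_sum]
        exact Finset.sum_eq_zero this
      rw [h2, add_zero]
    have := congrArg (fun t => TruncatedWittVector.coeff (⟨i, Nat.lt_succ_self i⟩ : Fin (i+1)) t) htr
    simpa only [WittVector.coeff_truncate] using this
  refine ⟨WittVector.mk p (fun i => (S (i + 1)).coeff i), fun n => ?_⟩
  rw [map_sub, sub_eq_zero]
  apply TruncatedWittVector.ext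
  intro i
  rw [WittVector.coeff_truncate, WittVector.coeff_truncate, WittVector.coeff_mk]
  exact (key i n i.isLt).symm

end S8T

namespace S8A

variable {p : ℕ} [hp : Fact p.Prime] {A : Type*} [CommRing A]

lemma pn_cancel (hflat : ∀ x : A, (p : A) * x = 0 → x = 0) :
    ∀ (n : ℕ) (x : A), (p : A) ^ n * x = 0 → x = 0 := by
  intro n
  induction n with
  | zero => intro x h; simpa using h
  | succ n ih => intro x h
                 rw [pow_succ, mul_assoc] at h
                 exact hflat x (ih _ h)

variable {pseq : ℕ → A}

lemma pseq_pow (hp0 : pseq 0 = (p : A)) (hpsucc : ∀ m, pseq (m + 1) ^ p = pseq m) (m : ℕ) :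
    pseq m ^ p ^ m = (p : A) := by
  induction m with
  | zero => simpa using hp0
  | succ m ih => rw [pow_succ', pow_mul, hpsucc, ih]
  
lemma pseq_cancel (hflat : ∀ x : A, (p : A) * x = 0 → x = 0)
    (hp0 : pseq 0 = (p : A)) (hpsucc : ∀ m, pseq (m + 1) ^ p = pseq m) (m : ℕ)
    (x : A) (h : pseq m * x = 0) : x = 0 := by
  have hsub : p ^ m - 1 + 1 = p ^ m := Nat.succ_pred_eq_of_pos (pow_pos hp.out.pos m)
  have h1 : (p : A) * x = 0 := by
    have h2 : pseq m ^ (p ^ m - 1) * (pseq m * x) = (p : A) * x := by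
      rw [← mul_assoc, ← pow_succ, hsub, pseq_pow hp0 hpsucc]
    rw [← h2, h, mul_zero]
  exact hflat x h1

lemma pseq_nzd_loc (hflat : ∀ x : A, (p : A) * x = 0 → x = 0) :
    Submonoid.powers (p : A) ≤ nonZeroDivisors A := by
  rintro x ⟨n, rfl⟩
  rw [mem_nonZeroDivisors_iff_right]
  intro z hz
  exact pn_cancel hflat n z (by rwa [mul_comm])

/-- Divisibility by `pseq m` from `a ^ p ^ m ∈ (p)`, via integral closedness. -/
lemma div_pseq (hflat : ∀ x : A, (p : A) * x = 0 → x = 0)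
    (hic : ∀ x : Localization.Away (p : A), IsIntegral A x →
      ∃ a : A, algebraMap A (Localization.Away (p : A)) a = x)
    (hp0 : pseq 0 = (p : A)) (hpsucc : ∀ m, pseq (m + 1) ^ p = pseq m)
    (m : ℕ) (a : A) (h : a ^ p ^ m ∈ Ideal.span {(p : A)}) :
    ∃ z : A, pseq m * z = a := by
  set L := Localization.Away (p : A)
  set φ := algebraMap A L with hφ
  have hinj : Function.Injective φ := IsLocalization.injective L (pseq_nzd_loc hflat)
  have hpunit : IsUnit (φ (p : A)) := by
    exact IsUnit.of_mul_eq_one _ (IsLocalization.Away.mul_invSelf (p : A))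
  have hsub : p ^ m - 1 + 1 = p ^ m := Nat.succ_pred_eq_of_pos (pow_pos hp.out.pos m)
  have hu : IsUnit (φ (pseq m)) := by
    apply isUnit_of_mul_isUnit_left (y := φ (pseq m ^ (p ^ m - 1)))
    rw [← map_mul, ← pow_succ', hsub, pseq_pow hp0 hpsucc]
    exact hpunit
  obtain ⟨b, hb⟩ := Ideal.mem_span_singleton'.mp h
  set t : L := (hu.unit⁻¹ : Lˣ) * φ a with ht
  have hmulte : φ (pseq m) * t = φ a := by
    rw [ht, ← mul_assoc, hu.mul_val_inv, one_mul]
  have htpow : t ^ p ^ m = φ b := by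
    have hcancel : φ (pseq m) ^ p ^ m * t ^ p ^ m = φ (pseq m) ^ p ^ m * φ b := by
      rw [← mul_pow, hmulte, ← map_pow, ← map_pow, ← hb, pseq_pow hp0 hpsucc, map_mul,
        mul_comm]
    exact (hu.pow (p ^ m)).mul_left_cancel hcancel
  have hint : IsIntegral A t := by
    refine ⟨Polynomial.X ^ p ^ m - Polynomial.C b,
      Polynomial.monic_X_pow_sub_C b (pow_ne_zero m hp.out.ne_zero), ?_⟩
    simp [Polynomial.eval₂_sub, htpow]
    rw [hφ, sub_self]
  obtain ⟨z, hz⟩ := hic t hint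
  refine ⟨z, hinj ?_⟩
  rw [map_mul, hz, hmulte]


section Tilt

variable [CharP (A ⧸ Ideal.span {(p : A)}) p]

lemma coeff_pow_pm (x : Perfection (A ⧸ Ideal.span {(p : A)}) p) (m : ℕ) :
    Perfection.coeff (A ⧸ Ideal.span {(p : A)}) p m x ^ p ^ m = Perfection.coeff (A ⧸ Ideal.span {(p : A)}) p 0 x := by
  induction m with
  | zero => simp
  | succ m ih => rw [pow_succ', pow_mul, Perfection.coeff_pow_p', ih]

lemma pu_nzd (hflat : ∀ x : A, (p : A) * x = 0 → x = 0)
    (hp0 : pseq 0 = (p : A)) (hpsucc : ∀ m, pseq (m + 1) ^ p = pseq m)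
    (pu : Perfection (A ⧸ Ideal.span {(p : A)}) p)
    (hpu : ∀ m : ℕ, Perfection.coeff (A ⧸ Ideal.span {(p : A)}) p m pu = Ideal.Quotient.mk (Ideal.span {(p : A)}) (pseq m))
    (x : Perfection (A ⧸ Ideal.span {(p : A)}) p) (h : pu * x = 0) : x = 0 := by
  apply Perfection.ext
  intro m
  rw [map_zero]
  -- pick a lift of coeff (m+1) x
  obtain ⟨a, ha⟩ := Ideal.Quotient.mk_surjective (Perfection.coeff (A ⧸ Ideal.span {(p : A)}) p (m + 1) x)
  have h1 : Ideal.Quotient.mk (Ideal.span {(p : A)}) (pseq (m + 1) * a) = 0 := by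
    rw [map_mul, ha, ← hpu]
    have := congrArg (Perfection.coeff (A ⧸ Ideal.span {(p : A)}) p (m + 1)) h
    rw [map_mul, map_zero] at this
    exact this
  obtain ⟨b, hb⟩ := Ideal.mem_span_singleton'.mp (Ideal.Quotient.eq_zero_iff_mem.mp h1)
  -- pseq m * a ^ p = p ^ p * b ^ p
  have h2 : pseq m * a ^ p = (p : A) ^ p * b ^ p := by
    rw [← hpsucc m, ← mul_pow, ← mul_pow, ← hb, mul_comm b]
  have hppow : (p : A) ^ p = pseq m ^ (p ^ (m + 1)) := by
    rw [← pseq_pow hp0 hpsucc m, ← pow_mul, ← pow_succ]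
  have h3 : a ^ p = pseq m ^ (p ^ (m + 1) - 1) * b ^ p := by
    have h3' := pseq_cancel hflat hp0 hpsucc m
      (a ^ p - pseq m ^ (p ^ (m + 1) - 1) * b ^ p) (by
        rw [mul_sub, h2, hppow, ← mul_assoc, ← pow_succ',
          Nat.sub_add_cancel (Nat.one_le_iff_ne_zero.mpr (pow_ne_zero _ hp.out.ne_zero)),
          sub_self])
    exact sub_eq_zero.mp h3'
  have h4 : a ^ p ∈ Ideal.span {(p : A)} := by
    rw [h3, Ideal.mem_span_singleton, ← pseq_pow hp0 hpsucc m]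
    exact Dvd.dvd.mul_right (pow_dvd_pow _ (by
      have h5 : p ^ m < p ^ (m + 1) := Nat.pow_lt_pow_right hp.out.one_lt (Nat.lt_succ_self m)
      omega)) _
  have : Perfection.coeff (A ⧸ Ideal.span {(p : A)}) p m x = Ideal.Quotient.mk (Ideal.span {(p : A)}) a ^ p := by
    rw [← Perfection.coeff_pow_p' x m, ha]
  rw [this, ← map_pow, Ideal.Quotient.eq_zero_iff_mem.mpr h4]

lemma coeff_surj (hfrob : ∀ y : A ⧸ Ideal.span {(p : A)}, ∃ x, x ^ p = y)
    (t : A ⧸ Ideal.span {(p : A)}) :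
    ∃ r : Perfection (A ⧸ Ideal.span {(p : A)}) p,
      Perfection.coeff (A ⧸ Ideal.span {(p : A)}) p 0 r = t := by
  classical
  let g : ℕ → A ⧸ Ideal.span {(p : A)} := fun n => Nat.rec t (fun _ prev => (hfrob prev).choose) n
  have hg : ∀ n, g (n + 1) ^ p = g n := fun n => (hfrob (g n)).choose_spec
  exact ⟨⟨g, hg⟩, rfl⟩

/-- the kernel of the zeroth projection of the tilt is generated by `pu` -/
lemma tilt_ker (hflat : ∀ x : A, (p : A) * x = 0 → x = 0)
    (hic : ∀ x : Localization.Away (p : A), IsIntegral A x →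
      ∃ a : A, algebraMap A (Localization.Away (p : A)) a = x)
    (hp0 : pseq 0 = (p : A)) (hpsucc : ∀ m, pseq (m + 1) ^ p = pseq m)
    (pu : Perfection (A ⧸ Ideal.span {(p : A)}) p)
    (hpu : ∀ m : ℕ, Perfection.coeff (A ⧸ Ideal.span {(p : A)}) p m pu =
      Ideal.Quotient.mk (Ideal.span {(p : A)}) (pseq m))
    (x : Perfection (A ⧸ Ideal.span {(p : A)}) p)
    (hx : Perfection.coeff (A ⧸ Ideal.span {(p : A)}) p 0 x = 0) :
    ∃ y, pu * y = x := by
  classical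
  -- lifts of the coefficients of x
  have hlift : ∀ m : ℕ, ∃ a : A, Ideal.Quotient.mk (Ideal.span {(p : A)}) a =
      Perfection.coeff (A ⧸ Ideal.span {(p : A)}) p m x :=
    fun m => Ideal.Quotient.mk_surjective _
  let a : ℕ → A := fun m => (hlift m).choose
  have ha : ∀ m, Ideal.Quotient.mk (Ideal.span {(p : A)}) (a m) =
      Perfection.coeff (A ⧸ Ideal.span {(p : A)}) p m x := fun m => (hlift m).choose_spec
  have hapow : ∀ m, (a m) ^ p ^ m ∈ Ideal.span {(p : A)} := by
    intro m
    rw [← Ideal.Quotient.eq_zero_iff_mem, map_pow, ha, coeff_pow_pm, hx]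
  have hdiv : ∀ m, ∃ z : A, pseq m * z = a m := fun m =>
    div_pseq hflat hic hp0 hpsucc m (a m) (hapow m)
  let z : ℕ → A := fun m => (hdiv m).choose
  have hz : ∀ m, pseq m * z m = a m := fun m => (hdiv m).choose_spec
  -- key congruence
  have hkey : ∀ m, Ideal.Quotient.mk (Ideal.span {(p : A)}) (pseq m * z (m + 1) ^ p) =
      Perfection.coeff (A ⧸ Ideal.span {(p : A)}) p m x := by
    intro m
    have : pseq m * z (m + 1) ^ p = (a (m + 1)) ^ p := by
      rw [← hz (m + 1), mul_pow, hpsucc m]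
    rw [this, map_pow, ha, Perfection.coeff_pow_p']
  -- compatibility of the z-sequence
  have hcompat : ∀ m, (Ideal.Quotient.mk (Ideal.span {(p : A)}) (z (m + 2) ^ p)) ^ p =
      Ideal.Quotient.mk (Ideal.span {(p : A)}) (z (m + 1) ^ p) := by
    intro m
    have h1 : Ideal.Quotient.mk (Ideal.span {(p : A)})
        (pseq (m + 1) * (z (m + 2) ^ p - z (m + 1))) = 0 := by
      rw [mul_sub]
      have e1 : pseq (m + 1) * z (m + 2) ^ p = a (m + 2) ^ p := by
        rw [← hz (m + 2), mul_pow, hpsucc (m + 1)]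
      rw [map_sub, e1, map_pow, ha, hz, ha, Perfection.coeff_pow_p', sub_self]
    obtain ⟨d, hd⟩ := Ideal.mem_span_singleton'.mp (Ideal.Quotient.eq_zero_iff_mem.mp h1)
    -- cancel pseq (m+1)
    have h2 : z (m + 2) ^ p - z (m + 1) = pseq (m + 1) ^ (p ^ (m + 1) - 1) * d := by
      have h2' := pseq_cancel hflat hp0 hpsucc (m + 1)
        ((z (m + 2) ^ p - z (m + 1)) - pseq (m + 1) ^ (p ^ (m + 1) - 1) * d) (by
          rw [mul_sub, ← hd, ← mul_assoc, ← pow_succ',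
            Nat.sub_add_cancel (Nat.one_le_iff_ne_zero.mpr (pow_ne_zero _ hp.out.ne_zero)),
            pseq_pow hp0 hpsucc, mul_comm d ((p : A)), sub_self])
      exact sub_eq_zero.mp h2'
    -- now pass to the quotient
    have h3 : Ideal.Quotient.mk (Ideal.span {(p : A)}) (z (m + 2) ^ p) =
        Ideal.Quotient.mk (Ideal.span {(p : A)}) (z (m + 1)) +
        Ideal.Quotient.mk (Ideal.span {(p : A)}) (pseq (m + 1) ^ (p ^ (m + 1) - 1) * d) := by
      rw [← map_add]
      congr 1
      rw [← h2]
      ring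
    have h4 : (Ideal.Quotient.mk (Ideal.span {(p : A)})
        (pseq (m + 1) ^ (p ^ (m + 1) - 1) * d)) ^ p = 0 := by
      rw [← map_pow, Ideal.Quotient.eq_zero_iff_mem, mul_pow, ← pow_mul]
      apply Ideal.mul_mem_right
      rw [Ideal.mem_span_singleton, ← pseq_pow hp0 hpsucc (m + 1)]
      refine pow_dvd_pow _ ?_
      have hq : 2 ≤ p ^ (m + 1) := by
        calc 2 ≤ p := hp.out.two_le
        _ ≤ p ^ (m + 1) := Nat.le_self_pow (by omega) p
      have hp2 := hp.out.two_le
      calc p ^ (m + 1) ≤ (p ^ (m + 1) - 1) * 2 := by omega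
        _ ≤ (p ^ (m + 1) - 1) * p := Nat.mul_le_mul_left _ hp2
    rw [h3, add_pow_char, h4, add_zero, map_pow]
  refine ⟨⟨fun m => Ideal.Quotient.mk (Ideal.span {(p : A)}) (z (m + 1) ^ p), hcompat⟩, ?_⟩
  apply Perfection.ext
  intro m
  show Perfection.coeff (A ⧸ Ideal.span {(p : A)}) p m pu *
    Ideal.Quotient.mk (Ideal.span {(p : A)}) (z (m + 1) ^ p) = _
  rw [hpu, ← map_mul, hkey]

end Tilt
end S8A

namespace S8H

variable {p : ℕ} [hp : Fact p.Prime] {B : Type*} [CommRing B]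

lemma haus (hc : IsAdicComplete (Ideal.span {(p : B)}) B) (y : B)
    (h : ∀ n : ℕ, y ∈ Ideal.span {(p : B) ^ n}) : y = 0 := by
  refine IsHausdorff.haus hc.toIsHausdorff y fun n => ?_
  rw [SModEq.zero, smul_eq_mul, Ideal.mul_top, Ideal.span_singleton_pow]
  exact h n

end S8H

end



/-!
STATEMENT 8.  Let `A` be a commutative `ℤ_(p)`-algebra satisfying: (i) `A` is
`ℤ_(p)`-flat; (ii) `A` is integrally closed in `A[1/p]`; (iii) the absolute Frobenius of
`A/pA` is surjective; (iv) there is a sequence `(p_m)_{m≥0}` in `A` with `p_0 = p` and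
`p_{m+1}^p = p_m`.  Let `p̲ ∈ R_A = lim_{x↦x^p} A/pA` be the element induced by `(p_m)`
and set `ξ = [p̲] - p ∈ W(R_A)`.  Then the sequence
`0 → W(R_A) --·ξ--> W(R_A) --θ--> Â → 0` is exact, where `θ` is Fontaine's homomorphism.

Here `R_A` is the tilt `Perfection (A/pA) p`; the `p`-adic completion `Â` is
presented as a ring `Ahat` with a homomorphism `c : A →+* Ahat` realizing it as the
`p`-adic completion of `A`; Fontaine's `θ` is characterized (uniquely, by the universal
property of Witt vectors of perfect rings with `p`-adically complete target) by
`θ([x]) ≡ x^{(0)} mod p` on Teichmüller representatives.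
-/

noncomputable section

set_option maxHeartbeats 2000000 in
set_option synthInstance.maxHeartbeats 400000 in
theorem statement8 (p : ℕ) [hp : Fact p.Prime]
    (A : Type*) [CommRing A]
    -- `A` is a `ℤ_(p)`-algebra ...
    (hZp : ∀ q : ℕ, q.Prime → q ≠ p → IsUnit (q : A))
    -- ... (i) which is `ℤ_(p)`-flat ...
    (hflat : ∀ x : A, (p : A) * x = 0 → x = 0)
    -- ... (ii) integrally closed in `A[1/p]` ...
    (hic : ∀ x : Localization.Away (p : A), IsIntegral A x →
      ∃ a : A, algebraMap A (Localization.Away (p : A)) a = x)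
    -- ... (iii) with surjective Frobenius on `A/pA` ...
    [CharP (A ⧸ Ideal.span {(p : A)}) p]
    (hfrob : ∀ y : A ⧸ Ideal.span {(p : A)}, ∃ x, x ^ p = y)
    -- ... (iv) and equipped with a compatible system of `p`-power roots of `p`
    (pseq : ℕ → A) (hp0 : pseq 0 = (p : A))
    (hpsucc : ∀ m : ℕ, pseq (m + 1) ^ p = pseq m)
    -- `Â` : the `p`-adic completion of `A`
    (Ahat : Type*) [CommRing Ahat] (c : A →+* Ahat)
    (hcomplete : IsAdicComplete (Ideal.span {(p : Ahat)}) Ahat)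
    (hdense : ∀ y : Ahat, ∀ n : ℕ, ∃ x : A, y - c x ∈ Ideal.span {(p : Ahat) ^ n})
    (hisom : ∀ (x : A) (n : ℕ), c x ∈ Ideal.span {(p : Ahat) ^ n} →
      x ∈ Ideal.span {(p : A) ^ n})
    -- `θ` : Fontaine's homomorphism `W(R_A) → Â`, characterized on Teichmüller lifts
    (θ : WittVector p (Perfection (A ⧸ Ideal.span {(p : A)}) p) →+* Ahat)
    (hθ : ∀ r : Perfection (A ⧸ Ideal.span {(p : A)}) p,
      Ideal.Quotient.mk (Ideal.span {(p : Ahat)}) (θ (WittVector.teichmuller p r)) =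
        Ideal.quotientMap (Ideal.span {(p : Ahat)}) c
          (by
            intro x hx
            rw [Ideal.mem_comap]
            rw [Ideal.mem_span_singleton] at hx ⊢
            obtain ⟨y, rfl⟩ := hx
            exact ⟨c y, by rw [map_mul, map_natCast]⟩)
          (Perfection.coeff (A ⧸ Ideal.span {(p : A)}) p 0 r))
    -- `p̲ ∈ R_A`, the element induced by the sequence `(p_m)`
    (pu : Perfection (A ⧸ Ideal.span {(p : A)}) p)
    (hpu : ∀ m : ℕ, Perfection.coeff (A ⧸ Ideal.span {(p : A)}) p m pu =
      Ideal.Quotient.mk (Ideal.span {(p : A)}) (pseq m)) :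
    -- the sequence `0 → W(R_A) --·ξ--> W(R_A) --θ--> Â → 0` is exact, where
    -- `ξ = [p̲] - p` :
    Function.Injective (fun w : WittVector p (Perfection (A ⧸ Ideal.span {(p : A)}) p)
      => (WittVector.teichmuller p pu - (p : WittVector p _)) * w) ∧
    (∀ w : WittVector p (Perfection (A ⧸ Ideal.span {(p : A)}) p),
      θ w = 0 ↔ ∃ x, (WittVector.teichmuller p pu - (p : WittVector p _)) * x = w) ∧
    Function.Surjective θ := by
  
  classical
  set ξ := WittVector.teichmuller p pu -
    (p : WittVector p (Perfection (A ⧸ Ideal.span {(p : A)}) p)) with hξ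
  -- p is a nonzerodivisor in Ahat
  have hpnzdHat : ∀ y : Ahat, (p : Ahat) * y = 0 → y = 0 := by
    intro y hy
    refine S8H.haus hcomplete y fun n => ?_
    obtain ⟨x, hx⟩ := hdense y n
    obtain ⟨u, hu⟩ := Ideal.mem_span_singleton'.mp (neg_mem hx)
    have hcpx : c ((p : A) * x) = (p : Ahat) * (c x - y) := by
      rw [map_mul, map_natCast, mul_sub, hy, sub_zero]
    have h1 : c ((p : A) * x) ∈ Ideal.span {(p : Ahat) ^ (n + 1)} := by
      refine Ideal.mem_span_singleton'.mpr ⟨u, ?_⟩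
      linear_combination (p : Ahat) * hu - hcpx
    obtain ⟨d, hd⟩ := Ideal.mem_span_singleton'.mp (hisom _ _ h1)
    have h3 : (p : A) * (x - d * (p : A) ^ n) = 0 := by
      rw [mul_sub, ← hd]
      ring
    have h2 : x - d * (p : A) ^ n = 0 := hflat _ h3
    have h4 : c x = c d * (p : Ahat) ^ n := by
      rw [sub_eq_zero.mp h2, map_mul, map_pow, map_natCast]
    refine Ideal.mem_span_singleton'.mpr ⟨c d - u, ?_⟩
    linear_combination -h4 - hu
  -- θ on Teichmüller lifts, mod p
  have theta_teich : ∀ (r : Perfection (A ⧸ Ideal.span {(p : A)}) p) (xt : A),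
      Ideal.Quotient.mk (Ideal.span {(p : A)}) xt =
        Perfection.coeff (A ⧸ Ideal.span {(p : A)}) p 0 r →
      θ (WittVector.teichmuller p r) - c xt ∈ Ideal.span {(p : Ahat)} := by
    intro r xt hxt
    have h := hθ r
    rw [← hxt, Ideal.quotientMap_mk] at h
    exact Ideal.Quotient.eq.mp h
  -- p-th root facts in the tilt
  have hroot : ∀ x : Perfection (A ⧸ Ideal.span {(p : A)}) p,
      (Perfection.pthRoot (A ⧸ Ideal.span {(p : A)}) p x) ^ p = x := by
    intro x
    have h := RingHom.congr_fun (Perfection.frobenius_pthRoot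
      (R := A ⧸ Ideal.span {(p : A)}) (p := p)) x
    rwa [RingHom.comp_apply, RingHom.id_apply, frobenius_def] at h
  have htpow : ∀ (x : Perfection (A ⧸ Ideal.span {(p : A)}) p) (n : ℕ),
      ((Perfection.pthRoot (A ⧸ Ideal.span {(p : A)}) p)^[n] x) ^ p ^ n = x := by
    intro x n
    induction n generalizing x with
    | zero => simp
    | succ n ih =>
      rw [Function.iterate_succ_apply, pow_succ, pow_mul, ih, hroot]
  have htcoeff : ∀ (x : Perfection (A ⧸ Ideal.span {(p : A)}) p) (k n : ℕ),
      Perfection.coeff (A ⧸ Ideal.span {(p : A)}) p k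
        ((Perfection.pthRoot (A ⧸ Ideal.span {(p : A)}) p)^[n] x) =
      Perfection.coeff (A ⧸ Ideal.span {(p : A)}) p (k + n) x := by
    intro x k n
    induction n generalizing x k with
    | zero => rfl
    | succ n ih =>
      rw [Function.iterate_succ_apply, ih]
      exact rfl
  -- θ sends [pu] to p
  have theta_pu : θ (WittVector.teichmuller p pu) = (p : Ahat) := by
    refine sub_eq_zero.mp (S8H.haus hcomplete _ fun n => ?_)
    rw [Ideal.mem_span_singleton]
    cases n with
    | zero => rw [pow_zero]; exact one_dvd _
    | succ n =>
      have h1 : (p : Ahat) ∣ θ (WittVector.teichmuller p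
          ((Perfection.pthRoot (A ⧸ Ideal.span {(p : A)}) p)^[n] pu)) - c (pseq n) := by
        rw [← Ideal.mem_span_singleton]
        apply theta_teich
        rw [htcoeff pu 0 n, zero_add]
        exact (hpu n).symm
      have h2 := dvd_sub_pow_of_dvd_sub h1 n
      rwa [← map_pow, ← map_pow, htpow, ← map_pow, S8A.pseq_pow hp0 hpsucc, map_natCast] at h2
  have theta_xi : θ ξ = 0 := by
    rw [hξ, map_sub, theta_pu, map_natCast, sub_self]
  -- powers of pu are nonzerodivisors
  have hpuPow : ∀ (k : ℕ) (x : Perfection (A ⧸ Ideal.span {(p : A)}) p),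
      pu ^ k * x = 0 → x = 0 := by
    intro k
    induction k with
    | zero => intro x h; simpa using h
    | succ k ih =>
      intro x h
      rw [pow_succ, mul_assoc] at h
      exact S8A.pu_nzd hflat hp0 hpsucc pu hpu x (ih _ h)
  -- injectivity of multiplication by ξ
  have hnzd : ∀ w : WittVector p (Perfection (A ⧸ Ideal.span {(p : A)}) p),
      ξ * w = 0 → w = 0 := by
    intro w hw
    by_contra hw0
    obtain ⟨n, w', hw'0, rfl⟩ := WittVector.verschiebung_nonzero hw0
    have h := WittVector.iterate_verschiebung_mul_coeff (p := p) ξ w' 0 n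
    rw [Function.iterate_zero_apply, hw, WittVector.zero_coeff, pow_zero, pow_one] at h
    have hξ0 : ξ.coeff 0 = pu := by
      rw [hξ, S8.coeff_zero_sub, WittVector.teichmuller_coeff_zero,
        WittVector.coeff_p_zero, sub_zero]
    rw [hξ0] at h
    exact hw'0 (hpuPow (p ^ n) _ h.symm)
  have hinj : Function.Injective
      (fun w : WittVector p (Perfection (A ⧸ Ideal.span {(p : A)}) p) => ξ * w) := by
    intro a b hab
    simp only at hab
    have h := hnzd (a - b) (by rw [mul_sub, hab, sub_self])
    exact sub_eq_zero.mp h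
  -- kernel step
  have hkstep : ∀ v : WittVector p (Perfection (A ⧸ Ideal.span {(p : A)}) p),
      ∃ yw : (Perfection (A ⧸ Ideal.span {(p : A)}) p) ×
        (WittVector p (Perfection (A ⧸ Ideal.span {(p : A)}) p)),
      θ v = 0 → (v = ξ * WittVector.teichmuller p yw.1 +
        (p : WittVector p (Perfection (A ⧸ Ideal.span {(p : A)}) p)) * yw.2 ∧
        θ yw.2 = 0) := by
    intro v
    by_cases hv : θ v = 0
    · obtain ⟨u, hu⟩ := S8.exists_p_pow_mul 1 (v - WittVector.teichmuller p (v.coeff 0)) (by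
        intro i hi
        interval_cases i
        rw [S8.coeff_zero_sub, WittVector.teichmuller_coeff_zero, sub_self])
      rw [pow_one] at hu
      have e2 : v = WittVector.teichmuller p (v.coeff 0) +
          (p : WittVector p (Perfection (A ⧸ Ideal.span {(p : A)}) p)) * u := by
        rw [← hu]; ring
      obtain ⟨xt, hxt⟩ := Ideal.Quotient.mk_surjective
        (Perfection.coeff (A ⧸ Ideal.span {(p : A)}) p 0 (v.coeff 0))
      have hc1 : θ (WittVector.teichmuller p (v.coeff 0)) ∈ Ideal.span {(p : Ahat)} := by
        have h5 : θ (WittVector.teichmuller p (v.coeff 0)) = θ v - (p : Ahat) * θ u := by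
          have h6 : WittVector.teichmuller p (v.coeff 0) = v -
              (p : WittVector p (Perfection (A ⧸ Ideal.span {(p : A)}) p)) * u := by
            rw [← hu]; ring
          rw [h6, map_sub, map_mul, map_natCast]
        rw [h5, hv, zero_sub]
        exact neg_mem (Ideal.mem_span_singleton'.mpr ⟨θ u, mul_comm _ _⟩)
      have hc2 : c xt ∈ Ideal.span {(p : Ahat)} := by
        have h3 := theta_teich (v.coeff 0) xt hxt
        have h7 : c xt = θ (WittVector.teichmuller p (v.coeff 0)) -
            (θ (WittVector.teichmuller p (v.coeff 0)) - c xt) := by ring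
        rw [h7]
        exact Ideal.sub_mem _ hc1 h3
      have hxt0 : Perfection.coeff (A ⧸ Ideal.span {(p : A)}) p 0 (v.coeff 0) = 0 := by
        rw [← hxt, Ideal.Quotient.eq_zero_iff_mem]
        have h8 := hisom xt 1 (by rwa [pow_one])
        rwa [pow_one] at h8
      obtain ⟨yy, hyy⟩ := S8A.tilt_ker hflat hic hp0 hpsucc pu hpu (v.coeff 0) hxt0
      have hveq : v = ξ * WittVector.teichmuller p yy +
          (p : WittVector p (Perfection (A ⧸ Ideal.span {(p : A)}) p)) *
            (WittVector.teichmuller p yy + u) := by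
        have e1 : WittVector.teichmuller p (v.coeff 0) =
            WittVector.teichmuller p pu * WittVector.teichmuller p yy := by
          rw [← map_mul, hyy]
        rw [e2, e1, hξ]
        ring
      refine ⟨(yy, WittVector.teichmuller p yy + u), fun _ => ⟨hveq, ?_⟩⟩
      apply hpnzdHat
      have h4 := congrArg θ hveq
      rw [map_add, map_mul, map_mul, theta_xi, zero_mul, zero_add, map_natCast, hv] at h4
      exact h4.symm
    · exact ⟨(0, 0), fun h => absurd h hv⟩
  -- kernel of θ
  have hker : ∀ w : WittVector p (Perfection (A ⧸ Ideal.span {(p : A)}) p),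
      θ w = 0 ↔ ∃ x, ξ * x = w := by
    intro w
    constructor
    · intro hw
      set Ψ : WittVector p (Perfection (A ⧸ Ideal.span {(p : A)}) p) →
          (Perfection (A ⧸ Ideal.span {(p : A)}) p) ×
          (WittVector p (Perfection (A ⧸ Ideal.span {(p : A)}) p)) :=
        fun v => (hkstep v).choose with hΨ
      set ws : ℕ → WittVector p (Perfection (A ⧸ Ideal.span {(p : A)}) p) :=
        fun n => (fun v => (Ψ v).2)^[n] w with hws
      have hws0 : ws 0 = w := rfl
      have hwssucc : ∀ n, ws (n + 1) = (Ψ (ws n)).2 := fun n =>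
        Function.iterate_succ_apply' _ _ _
      have hinv : ∀ n, θ (ws n) = 0 ∧ w = ξ * (∑ k ∈ Finset.range n,
          (p : WittVector p (Perfection (A ⧸ Ideal.span {(p : A)}) p)) ^ k *
            WittVector.teichmuller p (Ψ (ws k)).1) +
          (p : WittVector p (Perfection (A ⧸ Ideal.span {(p : A)}) p)) ^ n * ws n := by
        intro n
        induction n with
        | zero => exact ⟨hw, by simp [hws0]⟩
        | succ n ih =>
          obtain ⟨h1, h2⟩ := ih
          obtain ⟨h3, h4⟩ := (hkstep (ws n)).choose_spec h1
          refine ⟨by rw [hwssucc]; exact h4, ?_⟩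
          rw [Finset.sum_range_succ]
          have h3' : ws n = ξ * WittVector.teichmuller p (Ψ (ws n)).1 +
              (p : WittVector p (Perfection (A ⧸ Ideal.span {(p : A)}) p)) * ws (n + 1) := by
            rw [hwssucc]; exact h3
          linear_combination h2 +
            (p : WittVector p (Perfection (A ⧸ Ideal.span {(p : A)}) p)) ^ n * h3' 
      obtain ⟨s, hs⟩ := S8T.exists_series_limit
        (fun k => WittVector.teichmuller p (Ψ (ws k)).1)
      refine ⟨s, ?_⟩
      have hzero : ∀ n, WittVector.truncate n (ξ * s - w) = 0 := by
        intro n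
        obtain ⟨u, hu⟩ := (S8T.trunc_eq_zero_iff n _).mp (hs n)
        refine (S8T.trunc_eq_zero_iff n _).mpr ⟨ξ * u - ws n, ?_⟩
        have h2 := (hinv n).2
        linear_combination ξ * hu - h2
      exact sub_eq_zero.mp (S8T.trunc_zero_of_haus _ hzero)
    · rintro ⟨x, rfl⟩
      rw [map_mul, theta_xi, zero_mul]
  -- surjectivity of θ
  have hsurj : Function.Surjective θ := by
    intro y
    have hstep : ∀ v : Ahat, ∃ rz : (Perfection (A ⧸ Ideal.span {(p : A)}) p) × Ahat,
        v = θ (WittVector.teichmuller p rz.1) + (p : Ahat) * rz.2 := by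
      intro v
      obtain ⟨x, hx⟩ := hdense v 1
      rw [pow_one] at hx
      obtain ⟨r, hr⟩ := S8A.coeff_surj hfrob (Ideal.Quotient.mk (Ideal.span {(p : A)}) x)
      have h1 := theta_teich r x hr.symm
      have h2 : v - θ (WittVector.teichmuller p r) ∈ Ideal.span {(p : Ahat)} := by
        have h3 : v - θ (WittVector.teichmuller p r) =
            (v - c x) - (θ (WittVector.teichmuller p r) - c x) := by ring
        rw [h3]
        exact Ideal.sub_mem _ hx h1
      obtain ⟨z', hz'⟩ := Ideal.mem_span_singleton'.mp h2
      exact ⟨(r, z'), by linear_combination -hz'⟩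
    set Φ : Ahat → (Perfection (A ⧸ Ideal.span {(p : A)}) p) × Ahat :=
      fun v => (hstep v).choose with hΦ
    set z : ℕ → Ahat := fun n => (fun v => (Φ v).2)^[n] y with hz
    have hz0 : z 0 = y := rfl
    have hzsucc : ∀ n, z (n + 1) = (Φ (z n)).2 := fun n => Function.iterate_succ_apply' _ _ _
    have hinv : ∀ n, y = θ (∑ k ∈ Finset.range n,
        (p : WittVector p (Perfection (A ⧸ Ideal.span {(p : A)}) p)) ^ k *
          WittVector.teichmuller p (Φ (z k)).1) + (p : Ahat) ^ n * z n := by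
      intro n
      induction n with
      | zero => simp [hz0]
      | succ n ih =>
        have hspec := (hstep (z n)).choose_spec
        have hspec' : z n = θ (WittVector.teichmuller p (Φ (z n)).1) + (p : Ahat) * z (n + 1) := by
          rw [hzsucc]; exact hspec
        rw [Finset.sum_range_succ, map_add, map_mul, map_pow, map_natCast]
        linear_combination ih + (p : Ahat) ^ n * hspec' 
    obtain ⟨s, hs⟩ := S8T.exists_series_limit
      (fun k => WittVector.teichmuller p (Φ (z k)).1)
    refine ⟨s, ?_⟩
    refine sub_eq_zero.mp (S8H.haus hcomplete _ fun n => ?_)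
    obtain ⟨u, hu⟩ := (S8T.trunc_eq_zero_iff n _).mp (hs n)
    have h1 : θ s - θ (∑ k ∈ Finset.range n,
        (p : WittVector p (Perfection (A ⧸ Ideal.span {(p : A)}) p)) ^ k *
          WittVector.teichmuller p (Φ (z k)).1) = (p : Ahat) ^ n * θ u := by
      rw [← map_sub, hu, map_mul, map_pow, map_natCast]
    refine Ideal.mem_span_singleton'.mpr ⟨θ u - z n, ?_⟩
    have h2 := hinv n
    linear_combination h2 - h1
  exact ⟨hinj, hker, hsurj⟩
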